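/- Let V₁ and V₂ be commuting isometries on a complex Hilbert space H, let V = V₁V₂, and let M := ⋂_{n ∈ ℕ} range(Vⁿ). Then M is a closed subspace of H which is invariant under V₁, V₂, V₁* and V₂*, and the restrictions of V₁ and V₂ to M are unitary, i.e. V₁(M) = M and V₂(M) = M. -/

import Mathlib

open ContinuousLinearMap

/-- For commuting isometries `V₁, V₂` with `V = V₁V₂`, the subspace
`M = ⋂ₙ range (Vⁿ)` is closed, invariant under `V₁, V₂, V₁*, V₂*`, and the restrictions of
`V₁` and `V₂` to `M` are unitary, i.e. `V₁(M) = M` and `V₂(M) = M`. -/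
theorem unitary_part_of_commuting_isometries {H : Type*} [NormedAddCommGroup H]
    [InnerProductSpace ℂ H] [CompleteSpace H] (V₁ V₂ : H →L[ℂ] H)
    (hV₁ : adjoint V₁ * V₁ = 1) (hV₂ : adjoint V₂ * V₂ = 1) (hcomm : V₁ * V₂ = V₂ * V₁)
    (M : Submodule ℂ H) (hM : M = ⨅ n : ℕ, LinearMap.range (((V₁ * V₂) ^ n : H →L[ℂ] H) : H →ₗ[ℂ] H)) :
    IsClosed (M : Set H) ∧
    (∀ x ∈ M, V₁ x ∈ M) ∧ (∀ x ∈ M, V₂ x ∈ M) ∧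
    (∀ x ∈ M, adjoint V₁ x ∈ M) ∧ (∀ x ∈ M, adjoint V₂ x ∈ M) ∧
    V₁ '' (M : Set H) = (M : Set H) ∧ V₂ '' (M : Set H) = (M : Set H) := by
  set V := V₁ * V₂ with hVdef
  have hC12 : Commute V₁ V₂ := hcomm
  have hC1V : ∀ n : ℕ, V₁ * V ^ n = V ^ n * V₁ :=
    fun n => ((Commute.refl V₁).mul_right hC12).pow_right n
  have hC2V : ∀ n : ℕ, V₂ * V ^ n = V ^ n * V₂ :=
    fun n => (hC12.symm.mul_right (Commute.refl V₂)).pow_right n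
  -- norms
  have hn1 : ∀ x, ‖V₁ x‖ = ‖x‖ := V₁.norm_map_iff_adjoint_comp_self.mpr hV₁
  have hn2 : ∀ x, ‖V₂ x‖ = ‖x‖ := V₂.norm_map_iff_adjoint_comp_self.mpr hV₂
  have hnV : ∀ n : ℕ, ∀ x, ‖(V ^ n) x‖ = ‖x‖ := by
    intro n
    induction n with
    | zero => intro x; simp
    | succ k ih =>
      intro x
      rw [pow_succ]
      simp only [ContinuousLinearMap.mul_apply]
      rw [ih, hVdef, ContinuousLinearMap.mul_apply, hn1, hn2]
  -- membership characterization
  have hmem : ∀ x, x ∈ M ↔ ∀ n : ℕ, ∃ y, (V ^ n) y = x := by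
    intro x
    rw [hM, Submodule.mem_iInf]
    exact forall_congr' fun n => LinearMap.mem_range
  -- injectivity of V₁, V₂
  have hinj1 : Function.Injective V₁ := by
    intro a b h
    have := congrArg (adjoint V₁) h
    simpa [← ContinuousLinearMap.mul_apply, hV₁] using this
  have hinj2 : Function.Injective V₂ := by
    intro a b h
    have := congrArg (adjoint V₂) h
    simpa [← ContinuousLinearMap.mul_apply, hV₂] using this
  -- closedness
  have hclosed : IsClosed (M : Set H) := by
    rw [hM, Submodule.coe_iInf]
    refine isClosed_iInter fun n => ?_
    have hiso : Isometry ((V ^ n : H →L[ℂ] H) : H → H) :=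
      AddMonoidHomClass.isometry_of_norm _ (hnV n)
    rw [LinearMap.coe_range]; exact hiso.isClosedEmbedding.isClosed_range
  -- invariance under V₁
  have hinv1 : ∀ x ∈ M, V₁ x ∈ M := by
    intro x hx
    rw [hmem] at hx ⊢
    intro n
    obtain ⟨y, hy⟩ := hx n
    refine ⟨V₁ y, ?_⟩
    have := congrArg (fun A : H →L[ℂ] H => A y) (hC1V n)
    simp only [ContinuousLinearMap.mul_apply] at this
    rw [← this, hy]
  have hinv2 : ∀ x ∈ M, V₂ x ∈ M := by
    intro x hx
    rw [hmem] at hx ⊢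
    intro n
    obtain ⟨y, hy⟩ := hx n
    refine ⟨V₂ y, ?_⟩
    have := congrArg (fun A : H →L[ℂ] H => A y) (hC2V n)
    simp only [ContinuousLinearMap.mul_apply] at this
    rw [← this, hy]
  -- invariance under adjoints
  have hadj1 : ∀ x ∈ M, adjoint V₁ x ∈ M := by
    intro x hx
    rw [hmem] at hx ⊢
    intro n
    obtain ⟨y, hy⟩ := hx (n + 1)
    refine ⟨V₂ y, ?_⟩
    have h1 : (V ^ (n + 1)) y = V₁ (V₂ ((V ^ n) y)) := by
      rw [pow_succ', hVdef, mul_assoc]; simp [ContinuousLinearMap.mul_apply]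
    have h2 : adjoint V₁ (V₁ (V₂ ((V ^ n) y))) = V₂ ((V ^ n) y) := by
      have := congrArg (fun A : H →L[ℂ] H => A (V₂ ((V ^ n) y))) hV₁
      simpa [ContinuousLinearMap.mul_apply] using this
    have h3 : V₂ ((V ^ n) y) = (V ^ n) (V₂ y) := by
      have := congrArg (fun A : H →L[ℂ] H => A y) (hC2V n)
      simpa [ContinuousLinearMap.mul_apply] using this
    rw [← h3, ← h2, ← h1, hy]
  have hadj2 : ∀ x ∈ M, adjoint V₂ x ∈ M := by
    intro x hx
    rw [hmem] at hx ⊢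
    intro n
    obtain ⟨y, hy⟩ := hx (n + 1)
    refine ⟨V₁ y, ?_⟩
    have h1 : (V ^ (n + 1)) y = V₂ (V₁ ((V ^ n) y)) := by
      rw [pow_succ', hcomm, mul_assoc]; simp [ContinuousLinearMap.mul_apply]
    have h2 : adjoint V₂ (V₂ (V₁ ((V ^ n) y))) = V₁ ((V ^ n) y) := by
      have := congrArg (fun A : H →L[ℂ] H => A (V₁ ((V ^ n) y))) hV₂
      simpa [ContinuousLinearMap.mul_apply] using this
    have h3 : V₁ ((V ^ n) y) = (V ^ n) (V₁ y) := by
      have := congrArg (fun A : H →L[ℂ] H => A y) (hC1V n)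
      simpa [ContinuousLinearMap.mul_apply] using this
    rw [← h3, ← h2, ← h1, hy]
  -- surjectivity on M
  have hsurj1 : V₁ '' (M : Set H) = (M : Set H) := by
    apply Set.Subset.antisymm
    · rintro _ ⟨x, hx, rfl⟩
      exact hinv1 x hx
    · intro x hx
      refine ⟨adjoint V₁ x, hadj1 x hx, ?_⟩
      obtain ⟨y, hy⟩ := (hmem x).mp hx 1
      have h1 : x = V₁ (V₂ y) := by
        rw [← hy]; simp [hVdef, ContinuousLinearMap.mul_apply]
      have h2 : adjoint V₁ (V₁ (V₂ y)) = V₂ y := by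
        have := congrArg (fun A : H →L[ℂ] H => A (V₂ y)) hV₁
        simpa [ContinuousLinearMap.mul_apply] using this
      rw [h1, h2, ← h1]
  have hsurj2 : V₂ '' (M : Set H) = (M : Set H) := by
    apply Set.Subset.antisymm
    · rintro _ ⟨x, hx, rfl⟩
      exact hinv2 x hx
    · intro x hx
      refine ⟨adjoint V₂ x, hadj2 x hx, ?_⟩
      obtain ⟨y, hy⟩ := (hmem x).mp hx 1
      have h1 : x = V₂ (V₁ y) := by
        rw [← hy]
        rw [pow_one, hcomm]; simp [ContinuousLinearMap.mul_apply]
      have h2 : adjoint V₂ (V₂ (V₁ y)) = V₁ y := by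
        have := congrArg (fun A : H →L[ℂ] H => A (V₁ y)) hV₂
        simpa [ContinuousLinearMap.mul_apply] using this
      rw [h1, h2, ← h1]
  exact ⟨hclosed, hinv1, hinv2, hadj1, hadj2, hsurj1, hsurj2⟩
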